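/- Let t₀ ∈ (0, π), let a ≥ b ≥ 0 be real numbers with a² + b² = 2, let t₁ ≥ 0, and let g ∈ Sp(2) satisfy g·diag(E(a·t₁), E(b·t₁))·gᴴ = diag(E(t₀), E(t₀)). Then t₁ ≥ t₀. -/

import Mathlib

open Matrix Real

/-- `E θ = cos θ + (sin θ)·i`, the exponential of `θ·i` in the quaternions. -/
noncomputable def E (θ : ℝ) : Quaternion ℝ := ⟨Real.cos θ, Real.sin θ, 0, 0⟩

lemma cos_eq_of_sq_sum (c c' s s' : ℝ) (h : (c - c')^2 + (s - s')^2 = 0) : c = c' := by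
  have h1 : (c - c')^2 = 0 := by nlinarith [sq_nonneg (c - c'), sq_nonneg (s - s')]
  have := pow_eq_zero_iff (n := 2) (by norm_num) |>.mp h1
  linarith

lemma key_quat (q : Quaternion ℝ) (hq : q ≠ 0) (l m : ℝ)
    (h : q * E l = E m * q) : Real.cos l = Real.cos m := by
  obtain ⟨w, x, y, z⟩ := q
  have h1 := congrArg QuaternionAlgebra.re h
  have h2 := congrArg QuaternionAlgebra.imI h
  have h3 := congrArg QuaternionAlgebra.imJ h
  have h4 := congrArg QuaternionAlgebra.imK h
  erw [Quaternion.re_mul, Quaternion.re_mul] at h1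
  erw [Quaternion.imI_mul, Quaternion.imI_mul] at h2
  erw [Quaternion.imJ_mul, Quaternion.imJ_mul] at h3
  erw [Quaternion.imK_mul, Quaternion.imK_mul] at h4
  simp [E, Quaternion.re_mul, Quaternion.imI_mul, Quaternion.imJ_mul,
    Quaternion.imK_mul, QuaternionAlgebra.mk_mul_mk] at h1 h2 h3 h4
  have hne : w ≠ 0 ∨ x ≠ 0 ∨ y ≠ 0 ∨ z ≠ 0 := by
    by_contra hc
    push_neg at hc
    exact hq (by ext <;> simp [hc.1, hc.2.1, hc.2.2.1, hc.2.2.2, Quaternion.imK_zero, Quaternion.imJ_zero, Quaternion.imI_zero, Quaternion.re_zero])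
  rcases hne with hw | hx | hy | hz
  · have key : ((Real.cos l - Real.cos m)^2 + (Real.sin l - Real.sin m)^2) * w = 0 := by
      linear_combination (Real.cos l - Real.cos m) * h1 + (Real.sin l - Real.sin m) * h2
    rcases mul_eq_zero.mp key with h0 | h0
    · exact cos_eq_of_sq_sum _ _ _ _ h0
    · exact absurd h0 hw
  · have key : ((Real.cos l - Real.cos m)^2 + (Real.sin l - Real.sin m)^2) * x = 0 := by
      linear_combination (Real.cos l - Real.cos m) * h2 - (Real.sin l - Real.sin m) * h1
    rcases mul_eq_zero.mp key with h0 | h0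
    · exact cos_eq_of_sq_sum _ _ _ _ h0
    · exact absurd h0 hx
  · have key : ((Real.cos l - Real.cos m)^2 + (Real.sin l + Real.sin m)^2) * y = 0 := by
      linear_combination (Real.cos l - Real.cos m) * h3 - (Real.sin l + Real.sin m) * h4
    rcases mul_eq_zero.mp key with h0 | h0
    · exact cos_eq_of_sq_sum _ _ _ _ ((by ring_nf at h0 ⊢; linarith : (Real.cos l - Real.cos m)^2 + (Real.sin l - -Real.sin m)^2 = 0))
    · exact absurd h0 hy
  · have key : ((Real.cos l - Real.cos m)^2 + (Real.sin l + Real.sin m)^2) * z = 0 := by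
      linear_combination (Real.sin l + Real.sin m) * h3 + (Real.cos l - Real.cos m) * h4
    rcases mul_eq_zero.mp key with h0 | h0
    · exact cos_eq_of_sq_sum _ _ _ _ ((by ring_nf at h0 ⊢; linarith : (Real.cos l - Real.cos m)^2 + (Real.sin l - -Real.sin m)^2 = 0))
    · exact absurd h0 hz

/-- let `t₀ ∈ (0, π)`, `a ≥ b ≥ 0` with `a² + b² = 2`, `t₁ ≥ 0`, and let
`g ∈ Sp(2)` satisfy `g·diag(E(a t₁), E(b t₁))·gᴴ = diag(E t₀, E t₀)`. Then `t₁ ≥ t₀`. -/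
theorem geodesic_length_lower_bound
    (t₀ : ℝ) (ht₀ : t₀ ∈ Set.Ioo 0 π) (a b : ℝ) (hab : a ≥ b) (hb : b ≥ 0)
    (habs : a ^ 2 + b ^ 2 = 2) (t₁ : ℝ) (ht₁ : 0 ≤ t₁)
    (g : Matrix (Fin 2) (Fin 2) (Quaternion ℝ)) (hg : gᴴ * g = 1)
    (h : g * Matrix.diagonal ![E (a * t₁), E (b * t₁)] * gᴴ
        = Matrix.diagonal ![E t₀, E t₀]) :
    t₁ ≥ t₀ := by
  by_contra hlt
  push_neg at hlt
  obtain ⟨ht₀pos, ht₀pi⟩ := ht₀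
  have hb1 : b ≤ 1 := by nlinarith
  have hbt : b * t₁ ≤ t₁ := by nlinarith
  have hbt0 : 0 ≤ b * t₁ := mul_nonneg hb ht₁
  have h2 : g * Matrix.diagonal ![E (a * t₁), E (b * t₁)]
      = Matrix.diagonal ![E t₀, E t₀] * g := by
    calc g * Matrix.diagonal ![E (a * t₁), E (b * t₁)]
        = g * Matrix.diagonal ![E (a * t₁), E (b * t₁)] * (gᴴ * g) := by
          rw [hg, mul_one]
      _ = (g * Matrix.diagonal ![E (a * t₁), E (b * t₁)] * gᴴ) * g := by
          simp only [mul_assoc]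
      _ = _ := by rw [h]
  have hcol : ∃ i : Fin 2, g i 1 ≠ 0 := by
    by_contra hc
    push_neg at hc
    have h11 := congrFun (congrFun hg 1) 1
    simp [Matrix.mul_apply, Matrix.conjTranspose_apply, hc, Matrix.one_apply] at h11
  obtain ⟨i, hi⟩ := hcol
  have hvec : ![E t₀, E t₀] i = E t₀ := by fin_cases i <;> rfl
  have hentry : g i 1 * E (b * t₁) = E t₀ * g i 1 := by
    have := congrFun (congrFun h2 i) 1
    simpa [Matrix.mul_diagonal, Matrix.diagonal_mul, hvec] using this
  have hcos : Real.cos (b * t₁) = Real.cos t₀ := key_quat _ hi _ _ hentry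
  have := Real.injOn_cos ⟨hbt0, by linarith⟩ ⟨le_of_lt ht₀pos, le_of_lt ht₀pi⟩ hcos
  linarith
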